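/- (Strong metric subregularity ⇒ unique multiplier) Suppose h is convex PLQ, f = h∘c satisfies the basic constraint qualification at x̄, (x̄,ȳ) solves the KKT generalized equation 0 ∈ g(x,y) + G(x,y) with g(x,y) = (Dc(x)ᵀy, −c(x)) and G(x,y) = ({0}ⁿ, ∂h*(y)), and there is a neighborhood U of (x̄,ȳ) on which (x̄,ȳ) is the unique solution of the linearized generalized equation. Then M(x̄) := Null(Dc(x̄)ᵀ) ∩ ∂h(c(x̄)) = {ȳ}. -/

import Mathlib

open Matrix Set Filter

noncomputable section

abbrev V (m : ℕ) := Fin m → ℝ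

def domf {m : ℕ} (h : V m → EReal) : Set (V m) := {x | h x < ⊤}

def subdiff {m : ℕ} (h : V m → EReal) (c : V m) : Set (V m) :=
  {y | ∀ z, h c + ((y ⬝ᵥ (z - c) : ℝ) : EReal) ≤ h z}

def IsPolyhedral {m : ℕ} (C : Set (V m)) : Prop :=
  ∃ (s : ℕ) (a : Fin s → V m) (α : Fin s → ℝ), C = {x | ∀ j, a j ⬝ᵥ x ≤ α j}

def ConvexFun {m : ℕ} (h : V m → EReal) : Prop :=
  Convex ℝ {p : V m × ℝ | h p.1 ≤ (p.2 : EReal)}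

def IsPLQ {m : ℕ} (h : V m → EReal) : Prop :=
  (∃ x, h x < ⊤) ∧ (∀ x, h x ≠ ⊥) ∧
  ∃ (K : ℕ) (C : Fin (K + 1) → Set (V m)) (Q : Fin (K + 1) → Matrix (Fin m) (Fin m) ℝ)
    (b : Fin (K + 1) → V m) (β : Fin (K + 1) → ℝ),
    domf h = ⋃ k, C k ∧
    (∀ k, IsPolyhedral (C k)) ∧
    (∀ k, (Q k).IsSymm) ∧
    (∀ k, ∀ x ∈ C k,
      h x = (((1 / 2) * (x ⬝ᵥ (Q k *ᵥ x)) + b k ⬝ᵥ x + β k : ℝ) : EReal))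

def normalCone {m : ℕ} (D : Set (V m)) (c : V m) : Set (V m) :=
  {v | ∀ d ∈ D, v ⬝ᵥ (d - c) ≤ 0}

/-- Action of the Hessian of the Lagrangian `x ↦ ⟨ybar, c(x)⟩` at `xbar`,
as a vector: `(∇²(ybar c)(xbar) v) i`. -/
def hessApp {n m : ℕ} (c : V n → V m) (ybar : V m) (xbar : V n) (v : V n) : V n :=
  fun i => iteratedFDeriv ℝ 2 (fun x => ybar ⬝ᵥ c x) xbar ![v, Pi.single i 1]

/-- If `(xbar, ybar)` is, on some neighborhood, the unique solution of the
linearized KKT generalized equation, then the multiplier set `M(xbar)` is the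
singleton `{ybar}`. -/
theorem stmt15 {n m : ℕ} (h : V m → EReal) (c : V n → V m) (hc : ContDiff ℝ 2 c)
    (hplq : IsPLQ h) (hconv : ConvexFun h)
    (xbar : V n) (hx : c xbar ∈ domf h)
    (hbcq : {y : V m | ∀ d, y ⬝ᵥ (fderiv ℝ c xbar d) = 0}
        ∩ normalCone (domf h) (c xbar) = {0})
    (ybar : V m)
    (hsol : (∀ d, ybar ⬝ᵥ (fderiv ℝ c xbar d) = 0) ∧ ybar ∈ subdiff h (c xbar))
    (U : Set (V n × V m)) (hU : U ∈ nhds (xbar, ybar))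
    (huniq : ∀ p ∈ U,
      ((∀ d : V n, (hessApp c ybar xbar (p.1 - xbar)) ⬝ᵥ d
          + p.2 ⬝ᵥ (fderiv ℝ c xbar d) = 0) ∧
        p.2 ∈ subdiff h (c xbar + fderiv ℝ c xbar (p.1 - xbar))) →
      p = (xbar, ybar)) :
    {y : V m | ∀ d, y ⬝ᵥ (fderiv ℝ c xbar d) = 0} ∩ subdiff h (c xbar) = {ybar} := by
  ext y
  simp only [Set.mem_inter_iff, Set.mem_setOf_eq, Set.mem_singleton_iff]
  constructor
  · rintro ⟨hy1, hy2⟩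
    have hcont : Filter.Tendsto (fun t : ℝ => ((xbar, ybar + t • (y - ybar)) : V n × V m))
        (nhds 0) (nhds (xbar, ybar)) := by
      have hco : Continuous fun t : ℝ => ((xbar, ybar + t • (y - ybar)) : V n × V m) :=
        continuous_const.prodMk (continuous_const.add (continuous_id.smul continuous_const))
      simpa using hco.tendsto 0
    have hmem : (fun t : ℝ => ((xbar, ybar + t • (y - ybar)) : V n × V m)) ⁻¹' U
        ∈ nhds (0 : ℝ) := hcont hU
    rcases Metric.mem_nhds_iff.mp hmem with ⟨ε, hε, hball⟩
    set t := min (ε / 2) (1 / 2) with ht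
    have ht0 : 0 < t := lt_min (by linarith) (by norm_num)
    have ht1 : t ≤ 1 := le_trans (min_le_right _ _) (by norm_num)
    have htε : |t| < ε := by
      rw [abs_of_pos ht0]
      exact lt_of_le_of_lt (min_le_left _ _) (by linarith)
    have hU' : (xbar, ybar + t • (y - ybar)) ∈ U :=
      hball (by simpa [Metric.mem_ball, Real.dist_eq] using htε)
    have hzero : hessApp c ybar xbar (xbar - xbar) = 0 := by
      funext i
      simp only [hessApp, sub_self]
      exact ContinuousMultilinearMap.map_coord_zero _ (0 : Fin 2) rfl
    have key := huniq _ hU' ⟨?_, ?_⟩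
    · have h2 : ybar + t • (y - ybar) = ybar := congrArg Prod.snd key
      have h3 : t • (y - ybar) = 0 := by
        have := h2
        abel_nf at this ⊢
        linear_combination (norm := module) this
      rcases smul_eq_zero.mp h3 with h4 | h4
      · exact absurd h4 (ne_of_gt ht0)
      · linear_combination (norm := module) h4
    · intro d
      rw [hzero]
      simp [add_dotProduct, smul_dotProduct, sub_dotProduct, hy1 d, hsol.1 d]
    · intro z
      have hpt : c xbar + fderiv ℝ c xbar (xbar - xbar) = c xbar := by
        simp
      rw [hpt]
      have ha := hsol.2 z
      have hb := hy2 z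
      set a := ybar ⬝ᵥ (z - c xbar) with hadef
      set b := y ⬝ᵥ (z - c xbar) with hbdef
      have hdot : (ybar + t • (y - ybar)) ⬝ᵥ (z - c xbar) = (1 - t) * a + t * b := by
        simp [add_dotProduct, smul_dotProduct, sub_dotProduct, hadef, hbdef]
        ring
      rw [hdot]
      have hle : (1 - t) * a + t * b ≤ max a b := by
        rcases le_total a b with hab | hab
        · calc (1 - t) * a + t * b ≤ (1 - t) * b + t * b := by nlinarith
            _ = b := by ring
            _ ≤ max a b := le_max_right _ _
        · calc (1 - t) * a + t * b ≤ (1 - t) * a + t * a := by nlinarith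
            _ = a := by ring
            _ ≤ max a b := le_max_left _ _
      have hmax : h (c xbar) + ((max a b : ℝ) : EReal) ≤ h z := by
        rcases max_cases a b with ⟨hm, _⟩ | ⟨hm, _⟩
        · rw [hm]; exact ha
        · rw [hm]; exact hb
      calc h (c xbar) + (((1 - t) * a + t * b : ℝ) : EReal)
          ≤ h (c xbar) + ((max a b : ℝ) : EReal) :=
            add_le_add le_rfl (EReal.coe_le_coe_iff.mpr hle)
        _ ≤ h z := hmax
  · rintro rfl
    exact ⟨hsol.1, hsol.2⟩
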